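/- (Wendel) If X_1, ..., X_n are i.i.d. random points in ℝ^k whose distribution is symmetric with respect to the origin and assigns probability zero to every hyperplane through the origin, then P(0 ∉ conv{X_1, ..., X_n}) = 2^{-(n-1)} · Σ_{j=0}^{k-1} C(n-1, j). -/

import Mathlib

open MeasureTheory ProbabilityTheory RealInnerProductSpace
open scoped Classical ENNReal
noncomputable section
namespace Wendel
variable {E : Type*} [NormedAddCommGroup E] [InnerProductSpace ℝ E]
def sgn (b : Bool) : ℝ := if b then 1 else -1
lemma sgn_mul_self (b : Bool) : sgn b * sgn b = 1 := by cases b <;> simp [sgn]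
def Achv {n : ℕ} (x : Fin n → E) (σ : Fin n → Bool) : Prop :=
  ∃ v : E, ∀ i, 0 < sgn (σ i) * ⟪v, x i⟫
def GenPos (k : ℕ) {ι : Type*} (x : ι → E) : Prop :=
  ∀ (t : Finset ι) (g : ι → ℝ), t.card ≤ k → ∑ i ∈ t, g i • x i = 0 → ∀ i ∈ t, g i = 0
lemma GenPos.ne_zero {k : ℕ} {ι : Type*} {x : ι → E} (h : GenPos k x) (hk : 1 ≤ k) (i : ι) :
    x i ≠ 0 := by
  intro hxi
  have := h {i} (fun _ => 1) (by simpa using hk) (by simp [hxi]) i (by simp)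
  norm_num at this
/-- a uniform perturbation bound -/
lemma exists_pos_forall_abs_lt {n : ℕ} (f g : Fin n → ℝ) (hf : ∀ i, 0 < f i) :
    ∃ δ : ℝ, 0 < δ ∧ ∀ i, |δ * g i| < f i := by
  rcases isEmpty_or_nonempty (Fin n) with h | h
  · exact ⟨1, one_pos, fun i => (IsEmpty.false i).elim⟩
  · have hne : (Finset.univ : Finset (Fin n)).Nonempty := Finset.univ_nonempty
    set m := Finset.univ.inf' hne (fun i => f i / (|g i| + 1)) with hm
    have hmpos : 0 < m := by
      rw [hm, Finset.lt_inf'_iff]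
      intro i _
      exact div_pos (hf i) (by positivity)
    refine ⟨m / 2, by positivity, fun i => ?_⟩
    have h1 : m ≤ f i / (|g i| + 1) := Finset.inf'_le _ (Finset.mem_univ i)
    have h2 : |m / 2 * g i| = m / 2 * |g i| := by
      rw [abs_mul, abs_of_pos (by positivity)]
    rw [h2]
    have h3 : m / 2 * |g i| ≤ m / 2 * (|g i| + 1) - m / 2 := by ring_nf; nlinarith [abs_nonneg (g i)]
    have h4 : m / 2 * (|g i| + 1) ≤ (f i / (|g i| + 1)) / 2 * (|g i| + 1) := by
      apply mul_le_mul_of_nonneg_right _ (by positivity)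
      linarith
    have h5 : (f i / (|g i| + 1)) / 2 * (|g i| + 1) = f i / 2 := by
      have : |g i| + 1 ≠ 0 := by positivity
      field_simp
    nlinarith [hf i, hmpos]

lemma count_k1 {n : ℕ} (hn : 0 < n) [FiniteDimensional ℝ E] (hdim : Module.finrank ℝ E = 1)
    (x : Fin n → E) (hx : ∀ i, x i ≠ 0) :
    (Finset.univ.filter (Achv x)).card = 2 := by
  set i₀ : Fin n := ⟨0, hn⟩
  set v₀ := x i₀ with hv₀def
  have hv₀ : v₀ ≠ 0 := hx i₀
  have hspan : Submodule.span ℝ {v₀} = ⊤ :=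
    Submodule.eq_top_of_finrank_eq (by rw [finrank_span_singleton hv₀, hdim])
  have hmem : ∀ i, x i ∈ Submodule.span ℝ {v₀} := fun i => hspan ▸ Submodule.mem_top
  choose c hc using fun i => Submodule.mem_span_singleton.mp (hmem i)
  have hcne : ∀ i, c i ≠ 0 := by
    intro i h
    exact hx i (by rw [← hc i, h, zero_smul])
  have hnsq : 0 < ⟪v₀, v₀⟫ := by
    rw [real_inner_self_eq_norm_sq]
    have : 0 < ‖v₀‖ := norm_pos_iff.mpr hv₀
    positivity
  set σ₀ : Fin n → Bool := fun i => decide (0 < c i) with hσ₀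
  have hkey : Finset.univ.filter (Achv x) = {σ₀, fun i => !(σ₀ i)} := by
    ext σ
    simp only [Finset.mem_filter, Finset.mem_univ, true_and, Finset.mem_insert,
      Finset.mem_singleton]
    constructor
    · rintro ⟨v, hv⟩
      set t := ⟪v, v₀⟫ with htdef
      have hvx : ∀ i, ⟪v, x i⟫ = c i * t := by
        intro i
        rw [← hc i, real_inner_smul_right]
      have hti : ∀ i, 0 < sgn (σ i) * c i * t := by
        intro i
        have := hv i
        rw [hvx i] at this
        linarith [this, mul_assoc (sgn (σ i)) (c i) t]
      have ht0 : t ≠ 0 := by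
        intro h
        have := hti i₀
        rw [h, mul_zero] at this
        exact lt_irrefl 0 this
      rcases ht0.lt_or_gt with htneg | htpos
      · right
        funext i
        have hsc : sgn (σ i) * c i < 0 := by nlinarith [hti i]
        cases hσi : σ i with
        | true =>
          have : c i < 0 := by simp [sgn, hσi] at hsc; linarith
          simp [hσ₀, not_lt.mpr this.le]
        | false =>
          have : 0 < c i := by simp [sgn, hσi] at hsc; linarith
          simp [hσ₀, this]
      · left
        funext i
        have hsc : 0 < sgn (σ i) * c i := by nlinarith [hti i]
        cases hσi : σ i with
        | true =>
          have : 0 < c i := by simp [sgn, hσi] at hsc; linarith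
          simp [hσ₀, this]
        | false =>
          have : c i < 0 := by simp [sgn, hσi] at hsc; linarith
          simp [hσ₀, not_lt.mpr this.le]
    · have hpos : ∀ i, ⟪v₀, x i⟫ = c i * ⟪v₀, v₀⟫ := by
        intro i; rw [← hc i, real_inner_smul_right]
      rintro (rfl | rfl)
      · refine ⟨v₀, fun i => ?_⟩
        rw [hpos i]
        by_cases h : 0 < c i
        · have hbb : σ₀ i = true := by simp [hσ₀, h]
          rw [hbb]; simp [sgn]; nlinarith [pow_pos (norm_pos_iff.mpr hv₀) 2]
        · have hlt : c i < 0 := lt_of_le_of_ne (not_lt.mp h) (hcne i)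
          have hbb : σ₀ i = false := by simp [hσ₀, h]
          rw [hbb]; simp [sgn]; nlinarith [pow_pos (norm_pos_iff.mpr hv₀) 2]
      · refine ⟨-v₀, fun i => ?_⟩
        rw [inner_neg_left, hpos i]
        have hb : (fun i => !σ₀ i) i = !σ₀ i := rfl
        by_cases h : 0 < c i
        · have hbb : σ₀ i = true := by simp [hσ₀, h]
          rw [hb, hbb]; simp [sgn]; nlinarith [pow_pos (norm_pos_iff.mpr hv₀) 2]
        · have hlt : c i < 0 := lt_of_le_of_ne (not_lt.mp h) (hcne i)
          have hbb : σ₀ i = false := by simp [hσ₀, h]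
          rw [hb, hbb]; simp [sgn]; nlinarith [pow_pos (norm_pos_iff.mpr hv₀) 2]
  rw [hkey]
  refine Finset.card_pair ?_
  intro h
  have := congrFun h i₀
  simp at this

lemma pascal (n m : ℕ) :
    ∑ j ∈ Finset.range (m+1), (n+1).choose j
      = ∑ j ∈ Finset.range (m+1), n.choose j + ∑ j ∈ Finset.range m, n.choose j := by
  rw [Finset.sum_range_succ' (fun j => (n+1).choose j) m,
    Finset.sum_range_succ' (fun j => n.choose j) m]
  simp only [Nat.choose_succ_succ, Nat.choose_zero_right]
  rw [Finset.sum_add_distrib]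
  ring

theorem count_card :
    ∀ (n : ℕ), 1 ≤ n → ∀ (E : Type u) [NormedAddCommGroup E] [InnerProductSpace ℝ E]
      [FiniteDimensional ℝ E] (k : ℕ), 1 ≤ k → Module.finrank ℝ E = k →
      ∀ x : Fin n → E, GenPos k x →
      (Finset.univ.filter (Achv x)).card = 2 * ∑ j ∈ Finset.range k, (n-1).choose j := by
  intro n hn
  induction n, hn using Nat.le_induction with
  | base =>
    intro E _ _ _ k hk hdim x hgen
    have hx0 : x 0 ≠ 0 := hgen.ne_zero hk 0
    have hsum : ∑ j ∈ Finset.range k, Nat.choose 0 j = 1 := by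
      obtain ⟨m, rfl⟩ : ∃ m, k = m + 1 := ⟨k - 1, by omega⟩
      rw [Finset.sum_range_succ' (fun j => Nat.choose 0 j) m]
      simp [Nat.choose_eq_zero_of_lt]
    have hfilter : Finset.univ.filter (Achv x) = Finset.univ := by
      refine Finset.filter_true_of_mem fun σ _ => ?_
      refine ⟨sgn (σ 0) • x 0, fun i => ?_⟩
      have hi : i = 0 := Subsingleton.elim i 0
      subst hi
      rw [real_inner_smul_left, ← mul_assoc, sgn_mul_self, one_mul]
      rw [real_inner_self_eq_norm_sq]
      have : 0 < ‖x 0‖ := norm_pos_iff.mpr hx0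
      positivity
    rw [hfilter, hsum]
    simp
  | succ n hn ih =>
    intro E _ _ _ k hk hdim x hgen
    by_cases hk1 : k = 1
    · subst hk1
      rw [count_k1 (by omega) hdim x (fun i => hgen.ne_zero le_rfl i)]
      simp
    · have hk2 : 2 ≤ k := by omega
      obtain ⟨l, rfl⟩ : ∃ l, k = l + 2 := ⟨k - 2, by omega⟩
      have hkk : 1 ≤ l + 2 := by omega
      set a := x 0 with ha_def
      have ha : a ≠ 0 := hgen.ne_zero (by omega) 0
      have hnorma : 0 < ⟪a, a⟫ := by
        rw [real_inner_self_eq_norm_sq]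
        have : 0 < ‖a‖ := norm_pos_iff.mpr ha
        positivity
      set xs : Fin n → E := fun i => x i.succ with hxs
      set H : Submodule ℝ E := (ℝ ∙ a)ᗮ with hH
      haveI hfact : Fact (Module.finrank ℝ E = (l + 1) + 1) := ⟨by rw [hdim]⟩
      have hdimH : Module.finrank ℝ H = l + 1 := Submodule.finrank_orthogonal_span_singleton ha
      set y : Fin n → H := fun i => Submodule.orthogonalProjection H (xs i) with hy
      have horth : Hᗮ = ℝ ∙ a := by
        rw [hH, Submodule.orthogonal_orthogonal]
      have hdiffmem : ∀ i, xs i - (y i : E) ∈ (ℝ ∙ a) := by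
        intro i
        have h1 : xs i - (y i : E) ∈ Hᗮ := Submodule.sub_starProjection_mem_orthogonal (K := H) (xs i)
        rwa [horth] at h1
      choose d hd using fun i => Submodule.mem_span_singleton.mp (hdiffmem i)
      have hyx : ∀ j, (y j : E) = xs j - d j • a := by
        intro j
        have h := hd j
        rw [eq_sub_iff_add_eq] at h ⊢
        rw [add_comm]
        exact h
      have htrans : ∀ (v : H) (i : Fin n), ⟪(v : E), xs i⟫ = ⟪v, y i⟫ := by
        intro v i
        have h0 : ⟪(v : E), xs i - (y i : E)⟫ = 0 :=
          Submodule.inner_right_of_mem_orthogonal v.2 (Submodule.sub_starProjection_mem_orthogonal (K := H) (xs i))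
        have h1 : ⟪(v : E), xs i - (y i : E)⟫ = ⟪(v : E), xs i⟫ - ⟪(v : E), (y i : E)⟫ :=
          inner_sub_right _ _ _
        have h2 : (⟪v, y i⟫ : ℝ) = ⟪(v : E), (y i : E)⟫ := rfl
        rw [h2]
        linarith
      -- general position transfers
      have hgen_s : GenPos (l + 2) xs := by
        intro t g ht hsum0 i hi
        have hmem : Fin.succ i ∈ t.image Fin.succ := Finset.mem_image_of_mem _ hi
        have := hgen (t.image Fin.succ) (Fin.cons 0 g)
          (le_trans Finset.card_image_le ht)
          (by
            rw [Finset.sum_image (fun a _ b _ h => Fin.succ_injective n h)]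
            simpa [Fin.cons_succ] using hsum0) (Fin.succ i) hmem
        rwa [Fin.cons_succ] at this
      have hgen_y : GenPos (l + 1) y := by
        intro t g ht hsum0 i hi
        have hsumE : ∑ j ∈ t, g j • (y j : E) = 0 := by
          have h1 : ((∑ j ∈ t, g j • y j : H) : E) = ∑ j ∈ t, g j • (y j : E) := by
            push_cast
            rfl
          rw [← h1, hsum0]
          rfl
        have h0not : (0 : Fin (n + 1)) ∉ t.image Fin.succ := by
          simp [Fin.succ_ne_zero]
        have hsum1 : ∑ j ∈ insert (0 : Fin (n+1)) (t.image Fin.succ),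
            (Fin.cons (- ∑ j ∈ t, g j * d j) g : Fin (n+1) → ℝ) j • x j = 0 := by
          rw [Finset.sum_insert h0not,
            Finset.sum_image (fun a _ b _ h => Fin.succ_injective n h)]
          simp only [Fin.cons_zero, Fin.cons_succ]
          have hterm : ∀ j ∈ t, g j • x j.succ = g j • (y j : E) + (g j * d j) • a := by
            intro j _
            have : x j.succ = (y j : E) + d j • a := by
              rw [hyx j]
              simp [hxs]
            rw [this, smul_add, smul_smul]
          rw [Finset.sum_congr rfl hterm, Finset.sum_add_distrib, hsumE, zero_add,
            ← Finset.sum_smul, neg_smul, neg_add_cancel]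
        have hcard1 : (insert (0 : Fin (n+1)) (t.image Fin.succ)).card ≤ l + 2 := by
          have h1 := Finset.card_insert_le (0 : Fin (n+1)) (t.image Fin.succ)
          have h2 : (t.image Fin.succ).card ≤ t.card := Finset.card_image_le
          omega
        have := hgen _ _ hcard1 hsum1 (Fin.succ i)
          (Finset.mem_insert_of_mem (Finset.mem_image_of_mem _ hi))
        rwa [Fin.cons_succ] at this
      -- claims
      have claim1 : ∀ (σ' : Fin n → Bool) (b : Bool), Achv x (Fin.cons b σ') → Achv xs σ' := by
        rintro σ' b ⟨v, hv⟩
        exact ⟨v, fun i => by simpa [Fin.cons_succ] using hv i.succ⟩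
      have hBA : ∀ σ' : Fin n → Bool, Achv y σ' → Achv xs σ' := by
        rintro σ' ⟨vH, hvH⟩
        refine ⟨(vH : E), fun i => ?_⟩
        rw [htrans vH i]
        exact hvH i
      have claim2 : ∀ (σ' : Fin n → Bool), Achv y σ' → ∀ b, Achv x (Fin.cons b σ') := by
        rintro σ' ⟨vH, hvH⟩ b
        have hf : ∀ i, 0 < sgn (σ' i) * ⟪(vH : E), xs i⟫ := by
          intro i
          rw [htrans vH i]
          exact hvH i
        obtain ⟨δ, hδ, hδlt⟩ := exists_pos_forall_abs_lt
          (fun i => sgn (σ' i) * ⟪(vH : E), xs i⟫) (fun i => ⟪a, xs i⟫) hf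
        refine ⟨(vH : E) + (sgn b * δ) • a, fun i => ?_⟩
        refine Fin.cases ?_ (fun j => ?_) i
        · rw [Fin.cons_zero]
          have hva : ⟪(vH : E), a⟫ = 0 :=
            Submodule.mem_orthogonal_singleton_iff_inner_left.mp vH.2
          have hw : ⟪(vH : E) + (sgn b * δ) • a, x 0⟫ = sgn b * δ * ⟪a, a⟫ := by
            rw [← ha_def, inner_add_left, real_inner_smul_left, hva, zero_add]
          rw [hw, ← mul_assoc, ← mul_assoc, sgn_mul_self, one_mul]
          positivity
        · rw [Fin.cons_succ]
          have hxj : x j.succ = xs j := by simp [hxs]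
          have hw : sgn (σ' j) * ⟪(vH : E) + (sgn b * δ) • a, xs j⟫
              = sgn (σ' j) * ⟪(vH : E), xs j⟫ + (sgn (σ' j) * sgn b) * (δ * ⟪a, xs j⟫) := by
            rw [inner_add_left, real_inner_smul_left]
            ring
          rw [hxj, hw]
          have h1 := hδlt j
          rw [abs_lt] at h1
          have h2 : sgn (σ' j) * sgn b = 1 ∨ sgn (σ' j) * sgn b = -1 := by
            cases σ' j <;> cases b <;> simp [sgn]
          rcases h2 with h2 | h2 <;> rw [h2] <;> linarith
      have claim3 : ∀ (σ' : Fin n → Bool), ¬ Achv y σ' →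
          ¬ (Achv x (Fin.cons true σ') ∧ Achv x (Fin.cons false σ')) := by
        rintro σ' hB ⟨⟨vp, hvp⟩, ⟨vm, hvm⟩⟩
        have hp0 : 0 < ⟪vp, a⟫ := by
          have := hvp 0
          rw [Fin.cons_zero, ← ha_def] at this
          simpa [sgn] using this
        have hm0 : ⟪vm, a⟫ < 0 := by
          have := hvm 0
          rw [Fin.cons_zero, ← ha_def] at this
          simp [sgn] at this
          linarith
        set α := (⟪vp, a⟫ : ℝ) with hα
        set β := (⟪vm, a⟫ : ℝ) with hβ
        have hαβ : 0 < α - β := by linarith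
        set t : ℝ := α / (α - β) with htdef
        have ht0 : 0 < t := div_pos hp0 hαβ
        have ht1 : 1 - t > 0 := by
          have : t < 1 := by
            rw [htdef, div_lt_one hαβ]
            linarith
          linarith
        set w := (1 - t) • vp + t • vm with hwdef
        have hwa : ⟪w, a⟫ = 0 := by
          rw [hwdef, inner_add_left, real_inner_smul_left, real_inner_smul_left, ← hα, ← hβ,
            htdef]
          field_simp
          ring
        have hwH : w ∈ H := by
          rw [hH]
          exact Submodule.mem_orthogonal_singleton_iff_inner_left.mpr hwa
        apply hB
        refine ⟨⟨w, hwH⟩, fun i => ?_⟩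
        rw [← htrans ⟨w, hwH⟩ i]
        have hp := hvp i.succ
        have hm := hvm i.succ
        rw [Fin.cons_succ] at hp hm
        have hxi : x i.succ = xs i := by simp [hxs]
        rw [hxi] at hp hm
        have hcomb : sgn (σ' i) * ⟪w, xs i⟫
            = (1 - t) * (sgn (σ' i) * ⟪vp, xs i⟫) + t * (sgn (σ' i) * ⟪vm, xs i⟫) := by
          rw [hwdef, inner_add_left, real_inner_smul_left, real_inner_smul_left]
          ring
        have : (0:ℝ) < (1 - t) * (sgn (σ' i) * ⟪vp, xs i⟫) + t * (sgn (σ' i) * ⟪vm, xs i⟫) :=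
          add_pos (mul_pos ht1 hp) (mul_pos ht0 hm)
        exact hcomb ▸ this
      have claim4 : ∀ (σ' : Fin n → Bool), Achv xs σ' → ¬ Achv y σ' →
          (Achv x (Fin.cons true σ') ∨ Achv x (Fin.cons false σ')) := by
        rintro σ' ⟨v, hv⟩ hB
        have hva : ⟪v, a⟫ ≠ 0 := by
          intro h
          refine hB ⟨⟨v, ?_⟩, fun i => ?_⟩
          · rw [hH]
            exact Submodule.mem_orthogonal_singleton_iff_inner_left.mpr h
          · rw [← htrans ⟨v, _⟩ i]
            exact hv i
        rcases hva.lt_or_gt with h | h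
        · right
          refine ⟨v, fun i => ?_⟩
          refine Fin.cases ?_ (fun j => ?_) i
          · rw [Fin.cons_zero, ← ha_def]
            simp [sgn]
            linarith
          · rw [Fin.cons_succ]
            have hxi : x j.succ = xs j := by simp [hxs]
            rw [hxi]
            exact hv j
        · left
          refine ⟨v, fun i => ?_⟩
          refine Fin.cases ?_ (fun j => ?_) i
          · rw [Fin.cons_zero, ← ha_def]
            simpa [sgn] using h
          · rw [Fin.cons_succ]
            have hxi : x j.succ = xs j := by simp [hxs]
            rw [hxi]
            exact hv j
      -- pointwise count
      have hcount : ∀ σ' : Fin n → Bool,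
          ((if Achv x (Fin.cons true σ') then 1 else 0)
            + (if Achv x (Fin.cons false σ') then 1 else 0) : ℕ)
          = (if Achv xs σ' then 1 else 0) + (if Achv y σ' then 1 else 0) := by
        intro σ'
        by_cases hA : Achv xs σ'
        · by_cases hB : Achv y σ'
          · simp [claim2 σ' hB true, claim2 σ' hB false, hA, hB]
          · have h3 := claim3 σ' hB
            have h4 := claim4 σ' hA hB
            by_cases hT : Achv x (Fin.cons true σ')
            · have hF : ¬ Achv x (Fin.cons false σ') := fun hF => h3 ⟨hT, hF⟩
              simp [hT, hF, hA, hB]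
            · have hF : Achv x (Fin.cons false σ') := h4.resolve_left hT
              simp [hT, hF, hA, hB]
        · have hB : ¬ Achv y σ' := fun hB => hA (hBA σ' hB)
          have hT : ¬ Achv x (Fin.cons true σ') := fun h => hA (claim1 σ' true h)
          have hF : ¬ Achv x (Fin.cons false σ') := fun h => hA (claim1 σ' false h)
          simp [hT, hF, hA, hB]
      -- counting via the cons equivalence
      let e : (Fin n → Bool) × Bool ≃ (Fin (n+1) → Bool) :=
        { toFun := fun p => Fin.cons p.2 p.1
          invFun := fun σ => (fun i => σ i.succ, σ 0)
          left_inv := fun p => by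
            ext
            · simp
            · simp
          right_inv := fun σ => by
            funext i
            refine Fin.cases ?_ (fun j => ?_) i <;> simp }
      have hsum : (Finset.univ.filter (Achv x)).card
          = ∑ σ' : Fin n → Bool, (((if Achv x (Fin.cons true σ') then 1 else 0)
            + (if Achv x (Fin.cons false σ') then 1 else 0) : ℕ)) := by
        rw [Finset.card_filter]
        rw [← Fintype.sum_equiv e (fun p => if Achv x (e p) then 1 else 0)
          (fun σ => if Achv x σ then 1 else 0) (fun p => rfl)]
        rw [Fintype.sum_prod_type]
        refine Finset.sum_congr rfl fun σ' _ => ?_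
        rw [Fintype.sum_bool]
        rfl
      rw [hsum]
      simp_rw [hcount]
      rw [Finset.sum_add_distrib]
      have hA_card : ∑ σ' : Fin n → Bool, (if Achv xs σ' then 1 else 0)
          = (Finset.univ.filter (Achv xs)).card := (Finset.card_filter _ _).symm
      have hB_card : ∑ σ' : Fin n → Bool, (if Achv y σ' then 1 else 0)
          = (Finset.univ.filter (Achv y)).card := (Finset.card_filter _ _).symm
      rw [hA_card, hB_card, ih E (l+2) (by omega) hdim xs hgen_s,
        ih ↥H (l+1) (by omega) hdimH y hgen_y]
      obtain ⟨m, rfl⟩ : ∃ m, n = m + 1 := ⟨n - 1, by omega⟩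
      have hp := pascal m (l+1)
      simp only [Nat.add_sub_cancel] at *
      rw [pascal m (l+1)]
      ring


section Measure

variable {k : ℕ}

local notation "E'" => EuclideanSpace ℝ (Fin k)

/-- separation characterization -/
lemma sep_iff {n : ℕ} (x : Fin n → E') :
    (0 : E') ∉ convexHull ℝ (Set.range x) ↔ ∃ v : E', ∀ i, 0 < ⟪v, x i⟫ := by
  constructor
  · intro h0
    obtain ⟨f, u, hfu, hall⟩ := geometric_hahn_banach_point_closed
      (convex_convexHull ℝ _) ((Set.finite_range x).isClosed_convexHull ℝ) h0
    refine ⟨(InnerProductSpace.toDual ℝ _).symm f, fun i => ?_⟩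
    have h1 : (0:ℝ) < u := by simpa using hfu
    have h2 := hall (x i) (subset_convexHull ℝ _ (Set.mem_range_self i))
    have h3 : ⟪(InnerProductSpace.toDual ℝ E').symm f, x i⟫ = f (x i) :=
      InnerProductSpace.toDual_symm_apply
    rw [h3]
    linarith
  · rintro ⟨v, hv⟩ hmem
    have hconv : convexHull ℝ (Set.range x) ⊆ {z : E' | 0 < ⟪v, z⟫} := by
      refine convexHull_min ?_ ?_
      · rintro z ⟨i, rfl⟩
        exact hv i
      · exact convex_halfSpace_gt
          ⟨fun a b => inner_add_right v a b, fun c a => real_inner_smul_right v a c⟩ 0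
    have := hconv hmem
    simp at this

lemma isOpen_sep {n : ℕ} : IsOpen {x : Fin n → E' | ∃ v : E', ∀ i, 0 < ⟪v, x i⟫} := by
  have : {x : Fin n → E' | ∃ v : E', ∀ i, 0 < ⟪v, x i⟫}
      = ⋃ v : E', ⋂ i, {x : Fin n → E' | 0 < ⟪v, x i⟫} := by
    ext x
    simp [Set.mem_iInter]
  rw [this]
  refine isOpen_iUnion fun v => isOpen_iInter_of_finite fun i => ?_
  exact isOpen_lt continuous_const (Continuous.inner continuous_const (continuous_apply i))

variable (ν : Measure (EuclideanSpace ℝ (Fin k))) [IsProbabilityMeasure ν]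

lemma measurableSet_dep (m : ℕ) :
    MeasurableSet {y : Fin m → E' | ¬ LinearIndependent ℝ y} := by
  have : {y : Fin m → E' | ¬ LinearIndependent ℝ y}
      = {y : Fin m → E' | LinearIndependent ℝ y}ᶜ := by ext; simp
  rw [this]
  exact (isOpen_setOf_linearIndependent.measurableSet).compl

/-- pushforward of the product measure under reindexing by an injection -/
lemma map_pi_comp {m n : ℕ} (f : Fin m → Fin n) (hf : Function.Injective f) :
    Measure.map (fun x : Fin n → E' => x ∘ f) (Measure.pi fun _ : Fin n => ν)
      = Measure.pi fun _ : Fin m => ν := by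
  have hT : Measurable (fun x : Fin n → E' => x ∘ f) :=
    measurable_pi_lambda _ fun j => measurable_pi_apply (f j)
  refine (Measure.pi_eq fun s hs => ?_).symm
  rw [Measure.map_apply hT (MeasurableSet.univ_pi hs)]
  set t : Fin n → Set E' := fun i => if h : ∃ j, f j = i then s h.choose else Set.univ with ht
  have ht_f : ∀ j, t (f j) = s j := by
    intro j
    have hex : ∃ j', f j' = f j := ⟨j, rfl⟩
    rw [ht]
    simp only [dif_pos hex]
    exact congrArg s (hf hex.choose_spec)
  have hpre : (fun x : Fin n → E' => x ∘ f) ⁻¹' (Set.pi Set.univ s) = Set.pi Set.univ t := by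
    ext x
    simp only [Set.mem_preimage, Set.mem_pi, Set.mem_univ, true_imp_iff, Function.comp_apply]
    constructor
    · intro hx i
      rw [ht]
      dsimp only
      split_ifs with h
      · have h2 := hx h.choose
        rwa [h.choose_spec] at h2
      · exact Set.mem_univ _
    · intro hx j
      have := hx (f j)
      rwa [ht_f j] at this
  rw [hpre, Measure.pi_pi]
  rw [← Finset.prod_subset (Finset.subset_univ (Finset.univ.image f))
    (fun i _ hi => ?_)]
  · rw [Finset.prod_image (fun a _ b _ h => hf h)]
    exact Finset.prod_congr rfl fun j _ => by rw [ht_f j]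
  · have : ¬ ∃ j, f j = i := by
      intro ⟨j, hj⟩
      exact hi (Finset.mem_image.mpr ⟨j, Finset.mem_univ j, hj⟩)
    rw [ht]
    simp only [dif_neg this]
    exact measure_univ

lemma dep_null (hplane : ∀ v : E', v ≠ 0 → ν {x : E' | ⟪v, x⟫ = 0} = 0) :
    ∀ m : ℕ, m ≤ k → (Measure.pi fun _ : Fin m => ν) {y : Fin m → E' | ¬ LinearIndependent ℝ y} = 0 := by
  intro m
  induction m with
  | zero =>
    intro _
    have : {y : Fin 0 → E' | ¬ LinearIndependent ℝ y} = ∅ := by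
      ext y
      simp [linearIndependent_empty_type]
    rw [this, measure_empty]
  | succ m ih =>
    intro hm
    have hm' : m ≤ k := by omega
    set D : Set (Fin (m+1) → E') := {y | ¬ LinearIndependent ℝ y} with hD
    set S : Set ((Fin m → E') × E') :=
      {p | ¬ LinearIndependent ℝ (Fin.snoc p.1 p.2 : Fin (m+1) → E')} with hS
    have hsnoc_meas : Measurable (fun p : (Fin m → E') × E' =>
        (Fin.snoc p.1 p.2 : Fin (m+1) → E')) := by
      apply measurable_pi_lambda
      intro j
      refine Fin.lastCases ?_ (fun i => ?_) j
      · simp only [Fin.snoc_last]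
        exact measurable_snd
      · simp only [Fin.snoc_castSucc]
        exact (measurable_pi_apply i).comp measurable_fst
    have hSmeas : MeasurableSet S := by
      have : S = (fun p : (Fin m → E') × E' => (Fin.snoc p.1 p.2 : Fin (m+1) → E')) ⁻¹'
          {y : Fin (m+1) → E' | ¬ LinearIndependent ℝ y} := rfl
      rw [this]
      exact hsnoc_meas (measurableSet_dep m.succ)
    have mp : MeasurePreserving
        (Prod.swap ∘ (MeasurableEquiv.piFinSuccAbove (fun _ : Fin (m+1) => E') (Fin.last m)))
        (Measure.pi fun _ : Fin (m+1) => ν) ((Measure.pi fun _ : Fin m => ν).prod ν) :=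
      (Measure.measurePreserving_swap).comp
        (measurePreserving_piFinSuccAbove (fun _ : Fin (m+1) => ν) (Fin.last m))
    have hDT : D = (Prod.swap ∘
        (MeasurableEquiv.piFinSuccAbove (fun _ : Fin (m+1) => E') (Fin.last m))) ⁻¹' S := by
      ext y
      simp only [hD, hS, Set.mem_preimage, Function.comp_apply, Set.mem_setOf_eq,
        MeasurableEquiv.piFinSuccAbove_apply, Fin.insertNthEquiv_symm_apply, Prod.swap_prod_mk,
        Fin.removeNth_last, Fin.snoc_init_self]
    have hDnull : (Measure.pi fun _ : Fin (m+1) => ν) D = 0 := by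
      rw [hDT, mp.measure_preimage hSmeas.nullMeasurableSet]
      rw [Measure.measure_prod_null hSmeas]
      have hae : ∀ᵐ y' ∂(Measure.pi fun _ : Fin m => ν), LinearIndependent ℝ y' := by
        rw [ae_iff]
        exact ih hm'
      filter_upwards [hae] with y' hy'
      simp only [Pi.zero_apply]
      set W : Submodule ℝ E' := Submodule.span ℝ (Set.range y') with hW
      have hWfr : Module.finrank ℝ W ≤ m := by
        have := finrank_range_le_card (R := ℝ) y'
        simpa [Set.finrank] using this
      have hWorth : Wᗮ ≠ ⊥ := by
        intro hbot
        have := Submodule.finrank_add_finrank_orthogonal W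
        rw [hbot, finrank_bot, finrank_euclideanSpace_fin] at this
        omega
      obtain ⟨v, hvW, hv0⟩ := Submodule.exists_mem_ne_zero_of_ne_bot hWorth
      refine measure_mono_null ?_ (hplane v hv0)
      intro z hz
      have hzW : z ∈ W := by
        by_contra hzW
        exact hz (linearIndependent_fin_snoc.mpr ⟨hy', hzW⟩)
      exact Submodule.inner_left_of_mem_orthogonal hzW hvW
    exact hDnull

lemma isOpen_achv {n : ℕ} (σ : Fin n → Bool) : IsOpen {x : Fin n → E' | Achv x σ} := by
  have : {x : Fin n → E' | Achv x σ}
      = ⋃ v : E', ⋂ i, {x : Fin n → E' | 0 < sgn (σ i) * ⟪v, x i⟫} := by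
    ext x
    simp [Achv, Set.mem_iInter]
  rw [this]
  refine isOpen_iUnion fun v => isOpen_iInter_of_finite fun i => ?_
  exact isOpen_lt continuous_const
    (continuous_const.mul (Continuous.inner continuous_const (continuous_apply i)))

lemma genpos_ae (hplane : ∀ v : E', v ≠ 0 → ν {x : E' | ⟪v, x⟫ = 0} = 0) {n : ℕ} :
    ∀ᵐ x ∂(Measure.pi fun _ : Fin n => ν), GenPos k x := by
  rw [ae_iff]
  have hB : ∀ s : Finset (Fin n), s.card ≤ k →
      (Measure.pi fun _ : Fin n => ν) {x : Fin n → E' | ¬ LinearIndependent ℝ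
        (fun j : Fin s.card => x ((s.orderIsoOfFin rfl j : Fin n)))} = 0 := by
    intro s hs
    set f : Fin s.card → Fin n := fun j => (s.orderIsoOfFin rfl j : Fin n) with hfdef
    have hf : Function.Injective f := fun a b hab =>
      (s.orderIsoOfFin rfl).injective (Subtype.coe_injective hab)
    have hrw : {x : Fin n → E' | ¬ LinearIndependent ℝ (fun j => x (f j))}
        = (fun x : Fin n → E' => x ∘ f) ⁻¹' {y : Fin s.card → E' | ¬ LinearIndependent ℝ y} := rfl
    have hTm : Measurable (fun x : Fin n → E' => x ∘ f) :=
      measurable_pi_lambda _ fun j => measurable_pi_apply (f j)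
    rw [hrw, ← Measure.map_apply hTm (measurableSet_dep s.card), map_pi_comp ν f hf]
    exact dep_null ν hplane s.card hs
  refine measure_mono_null (fun x hx => ?_)
    (measure_iUnion_null fun s : Finset (Fin n) =>
      (measure_iUnion_null fun hs : s.card ≤ k => hB s hs))
  have hx' : ¬ GenPos k x := hx
  rw [GenPos] at hx'
  push_neg at hx'
  obtain ⟨t, g, ht, hsum, i, hit, hgi⟩ := hx'
  refine Set.mem_iUnion.mpr ⟨t, Set.mem_iUnion.mpr ⟨ht, ?_⟩⟩
  intro hli
  set e := t.orderIsoOfFin rfl with he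
  have hsum' : ∑ j : Fin t.card, g ((e j : Fin n)) • x (e j) = 0 := by
    rw [← Finset.sum_attach t (fun i => g i • x i)] at hsum
    rw [← hsum, ← Finset.univ_eq_attach]
    exact Fintype.sum_equiv e.toEquiv _ _ (fun j => rfl)
  have hcoef := Fintype.linearIndependent_iff.mp hli (fun j => g (e j)) hsum'
  have h2 := hcoef (e.symm ⟨i, hit⟩)
  rw [OrderIso.apply_symm_apply] at h2
  exact hgi h2

end Measure
end Wendel

/-- (Wendel) If `X 1, ..., X n` are i.i.d. random points in `ℝ^k` whose common law is
symmetric with respect to the origin and assigns probability zero to every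
hyperplane through the origin, then
`P(0 ∉ conv{X 1, ..., X n}) = 2^{-(n-1)} ∑_{j=0}^{k-1} C(n-1, j)`. -/
theorem stmt12 {Ω : Type*} [MeasurableSpace Ω] (μ : Measure Ω) [IsProbabilityMeasure μ]
    (k n : ℕ) (hk : 1 ≤ k) (hn : k < n)
    (X : Fin n → Ω → EuclideanSpace ℝ (Fin k)) (hmeas : ∀ i, Measurable (X i))
    (hindep : iIndepFun X μ)
    (ν : Measure (EuclideanSpace ℝ (Fin k)))
    (hlaw : ∀ i, Measure.map (X i) μ = ν)
    (hsymm : Measure.map (fun x => -x) ν = ν)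
    (hplane : ∀ v : EuclideanSpace ℝ (Fin k), v ≠ 0 → ν {x | ⟪v, x⟫ = 0} = 0) :
    μ {ω | (0 : EuclideanSpace ℝ (Fin k)) ∉ convexHull ℝ (Set.range fun i => X i ω)} =
      ENNReal.ofReal (((1:ℝ)/2) ^ (n-1) * ∑ j ∈ Finset.range k, ((n-1).choose j : ℝ)) := by
  classical
  have hn1 : 1 ≤ n := by omega
  haveI hnν : IsProbabilityMeasure ν := by
    rw [← hlaw ⟨0, by omega⟩]
    exact Measure.isProbabilityMeasure_map (hmeas _).aemeasurable
  set π := Measure.pi (fun _ : Fin n => ν) with hπ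
  have hΦmeas : Measurable (fun ω (i : Fin n) => X i ω) := measurable_pi_lambda _ hmeas
  -- joint law
  have hjoint : Measure.map (fun ω (i : Fin n) => X i ω) μ = π := by
    rw [hπ]
    refine (Measure.pi_eq fun s hs => ?_).symm
    rw [Measure.map_apply hΦmeas (MeasurableSet.univ_pi hs)]
    have hpre : (fun ω (i : Fin n) => X i ω) ⁻¹' (Set.pi Set.univ s) = ⋂ i, X i ⁻¹' s i := by
      ext ω
      simp [Set.mem_pi]
    rw [hpre]
    have h2 := (iIndepFun_iff_measure_inter_preimage_eq_mul.mp hindep) Finset.univ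
      (sets := s) (fun i _ => hs i)
    have h3 : (⋂ i ∈ Finset.univ, X i ⁻¹' s i) = ⋂ i, X i ⁻¹' s i := by
      simp
    rw [h3] at h2
    rw [h2]
    refine Finset.prod_congr rfl fun i _ => ?_
    rw [← hlaw i, Measure.map_apply (hmeas i) (hs i)]
  -- the separating set
  set Ssep : Set (Fin n → EuclideanSpace ℝ (Fin k)) := {x | ∃ v, ∀ i, 0 < ⟪v, x i⟫} with hSsep
  have hSsepMeas : MeasurableSet Ssep := Wendel.isOpen_sep.measurableSet
  have hset : {ω | (0 : EuclideanSpace ℝ (Fin k)) ∉ convexHull ℝ (Set.range fun i => X i ω)}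
      = (fun ω (i : Fin n) => X i ω) ⁻¹' Ssep := by
    ext ω
    simp only [Set.mem_setOf_eq, Set.mem_preimage, hSsep]
    exact Wendel.sep_iff _
  rw [hset, ← Measure.map_apply hΦmeas hSsepMeas, hjoint]
  -- achievability sets are measurable
  have hSm : ∀ σ : Fin n → Bool, MeasurableSet {x : Fin n → EuclideanSpace ℝ (Fin k) |
      Wendel.Achv x σ} := fun σ => (Wendel.isOpen_achv σ).measurableSet
  -- sign flips
  have hflip : ∀ σ : Fin n → Bool,
      π {x : Fin n → EuclideanSpace ℝ (Fin k) | Wendel.Achv x σ} = π Ssep := by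
    intro σ
    have hcoord : ∀ b : Bool, MeasurePreserving
        (fun z : EuclideanSpace ℝ (Fin k) => Wendel.sgn b • z) ν ν := by
      intro b
      cases b
      · have : (fun z : EuclideanSpace ℝ (Fin k) => Wendel.sgn false • z) = fun z => -z := by
          funext z
          simp [Wendel.sgn]
        rw [this]
        exact ⟨measurable_neg, hsymm⟩
      · have : (fun z : EuclideanSpace ℝ (Fin k) => Wendel.sgn true • z) = id := by
          funext z
          simp [Wendel.sgn]
        rw [this]
        exact MeasurePreserving.id ν
    have hT : MeasurePreserving
        (fun (x : Fin n → EuclideanSpace ℝ (Fin k)) (i : Fin n) => Wendel.sgn (σ i) • x i) π π :=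
      measurePreserving_pi _ _ (fun i => hcoord (σ i))
    have hpre : (fun (x : Fin n → EuclideanSpace ℝ (Fin k)) (i : Fin n) =>
        Wendel.sgn (σ i) • x i) ⁻¹' Ssep = {x | Wendel.Achv x σ} := by
      ext x
      simp only [Set.mem_preimage, hSsep, Set.mem_setOf_eq, Wendel.Achv]
      refine exists_congr fun v => forall_congr' fun i => ?_
      rw [real_inner_smul_right]
    rw [← hpre, hT.measure_preimage hSsepMeas.nullMeasurableSet]
  -- a.e. count
  set C : ℕ := 2 * ∑ j ∈ Finset.range k, (n-1).choose j with hC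
  have hNae : ∀ᵐ x ∂π, ((Finset.univ.filter (Wendel.Achv x)).card : ℝ≥0∞) = (C : ℝ≥0∞) := by
    refine (Wendel.genpos_ae ν hplane (n := n)).mono fun x hx => ?_
    rw [Wendel.count_card n hn1 (EuclideanSpace ℝ (Fin k)) k hk finrank_euclideanSpace_fin x hx]
  -- summation
  have hsum1 : ∑ σ : Fin n → Bool, π {x | Wendel.Achv x σ} = (2^n : ℝ≥0∞) * π Ssep := by
    rw [Finset.sum_congr rfl (fun σ _ => hflip σ), Finset.sum_const, Finset.card_univ]
    have hcard : Fintype.card (Fin n → Bool) = 2^n := by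
      simp [Fintype.card_fun]
    rw [hcard, nsmul_eq_mul]
    push_cast
    ring
  have hsum2 : ∑ σ : Fin n → Bool, π {x | Wendel.Achv x σ} = (C : ℝ≥0∞) := by
    have hind : ∀ σ : Fin n → Bool, π {x | Wendel.Achv x σ}
        = ∫⁻ x, Set.indicator {x' | Wendel.Achv x' σ} (fun _ => (1:ℝ≥0∞)) x ∂π :=
      fun σ => (lintegral_indicator_one (hSm σ)).symm
    rw [Finset.sum_congr rfl fun σ _ => hind σ, ← lintegral_finset_sum]
    · have hpt : ∀ x : Fin n → EuclideanSpace ℝ (Fin k),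
          ∑ σ : Fin n → Bool, Set.indicator {x' | Wendel.Achv x' σ} (fun _ => (1:ℝ≥0∞)) x
          = ((Finset.univ.filter (Wendel.Achv x)).card : ℝ≥0∞) := by
        intro x
        rw [Finset.card_filter]
        push_cast
        refine Finset.sum_congr rfl fun σ _ => ?_
        simp [Set.indicator_apply]
      rw [lintegral_congr hpt, lintegral_congr_ae hNae, lintegral_const, measure_univ, mul_one]
    · exact fun σ _ => measurable_one.indicator (hSm σ)
  have hkey : (2^n : ℝ≥0∞) * π Ssep = (C : ℝ≥0∞) := by rw [← hsum1, hsum2]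
  have h2n0 : (2^n : ℝ≥0∞) ≠ 0 := by
    simp
  have h2nt : (2^n : ℝ≥0∞) ≠ ⊤ := by
    simp [ENNReal.pow_ne_top]
  have hval : π Ssep = (C : ℝ≥0∞) / 2^n := by
    rw [ENNReal.eq_div_iff h2n0 h2nt]
    exact hkey
  rw [hval]
  have hCr : ((C : ℝ≥0∞)) = ENNReal.ofReal (C : ℝ) := (ENNReal.ofReal_natCast C).symm
  have h2nr : ((2:ℝ≥0∞)^n) = ENNReal.ofReal ((2:ℝ)^n) := by
    rw [ENNReal.ofReal_pow (by norm_num)]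
    norm_num
  rw [hCr, h2nr, ← ENNReal.ofReal_div_of_pos (by positivity)]
  congr 1
  rw [hC]
  push_cast
  obtain ⟨m, rfl⟩ : ∃ m, n = m + 1 := ⟨n-1, by omega⟩
  simp only [Nat.add_sub_cancel]
  rw [div_pow, one_pow]
  field_simp
  ring
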